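/- Let X be a Banach space and let (F_n) be a decreasing sequence of spear sets in B_X whose diameters tend to zero. If z belongs to the intersection of all F_n, then z is a spear vector, i.e. ‖z + 𝕋x‖ = 1 + ‖x‖ for all x ∈ X. -/
import Mathlib


open Metric Filter

/-- A spear set: `‖F + 𝕋x‖ = 1 + ‖x‖` for every `x ∈ X`. -/
def IsSpearSet (𝕜 : Type*) {X : Type*} [RCLike 𝕜] [NormedAddCommGroup X]
    [NormedSpace 𝕜 X] (F : Set X) : Prop :=
  ∀ x : X, sSup {r : ℝ | ∃ z ∈ F, ∃ ω : 𝕜, ‖ω‖ = 1 ∧ r = ‖z + ω • x‖} = 1 + ‖x‖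

/-- A spear vector: `z ∈ S_X` with `‖z + 𝕋x‖ = 1 + ‖x‖` for every `x ∈ X`. -/
def IsSpear (𝕜 : Type*) {X : Type*} [RCLike 𝕜] [NormedAddCommGroup X]
    [NormedSpace 𝕜 X] (z : X) : Prop :=
  ‖z‖ = 1 ∧ ∀ x : X, sSup {r : ℝ | ∃ ω : 𝕜, ‖ω‖ = 1 ∧ r = ‖z + ω • x‖} = 1 + ‖x‖

/-- if `(F n)` is a decreasing sequence of spear sets of `B_X` whose diameters
tend to zero and `z ∈ ⋂ n, F n`, then `z` is a spear vector. -/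
theorem stmt2 {𝕜 X : Type*} [RCLike 𝕜] [NormedAddCommGroup X] [NormedSpace 𝕜 X]
    [CompleteSpace X] (F : ℕ → Set X) (hFball : ∀ n, F n ⊆ closedBall (0 : X) 1)
    (hdec : Antitone F) (hspear : ∀ n, IsSpearSet 𝕜 (F n))
    (hdiam : Tendsto (fun n => Metric.diam (F n)) atTop (nhds 0))
    (z : X) (hz : z ∈ ⋂ n, F n) :
    IsSpear 𝕜 z := by
  have hzn : ∀ n, z ∈ F n := fun n => Set.mem_iInter.mp hz n
  have hznorm : ‖z‖ ≤ 1 := by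
    have := hFball 0 (hzn 0)
    simpa [mem_closedBall, dist_eq_norm] using this
  have main : ∀ x : X, sSup {r : ℝ | ∃ ω : 𝕜, ‖ω‖ = 1 ∧ r = ‖z + ω • x‖} = 1 + ‖x‖ := by
    intro x
    set S : Set ℝ := {r : ℝ | ∃ ω : 𝕜, ‖ω‖ = 1 ∧ r = ‖z + ω • x‖} with hS
    have hSne : S.Nonempty := ⟨‖z + (1 : 𝕜) • x‖, 1, norm_one, rfl⟩
    have hSbdd : ∀ r ∈ S, r ≤ 1 + ‖x‖ := by
      rintro r ⟨ω, hω, rfl⟩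
      calc ‖z + ω • x‖ ≤ ‖z‖ + ‖ω • x‖ := norm_add_le _ _
        _ ≤ 1 + ‖x‖ := by
          apply add_le_add hznorm
          rw [norm_smul, hω, one_mul]
    have hSbdd' : BddAbove S := ⟨1 + ‖x‖, hSbdd⟩
    refine le_antisymm (csSup_le hSne hSbdd) ?_
    refine le_of_forall_pos_le_add fun ε hε => ?_
    -- pick n with diam (F n) < ε/2
    obtain ⟨n, hn⟩ : ∃ n, Metric.diam (F n) < ε / 2 := by
      have := (hdiam.eventually (eventually_lt_nhds (show (0:ℝ) < ε/2 by linarith))).exists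
      exact this
    -- spear set property at n
    have hT := hspear n x
    set T : Set ℝ := {r : ℝ | ∃ z' ∈ F n, ∃ ω : 𝕜, ‖ω‖ = 1 ∧ r = ‖z' + ω • x‖} with hTdef
    have hTne : T.Nonempty := ⟨‖z + (1 : 𝕜) • x‖, z, hzn n, 1, norm_one, rfl⟩
    have hTbdd : BddAbove T := by
      refine ⟨1 + ‖x‖, ?_⟩
      rintro r ⟨z', hz', ω, hω, rfl⟩
      have hz'norm : ‖z'‖ ≤ 1 := by
        have := hFball n hz'
        simpa [mem_closedBall, dist_eq_norm] using this
      calc ‖z' + ω • x‖ ≤ ‖z'‖ + ‖ω • x‖ := norm_add_le _ _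
        _ ≤ 1 + ‖x‖ := by
          apply add_le_add hz'norm
          rw [norm_smul, hω, one_mul]
    have hlt : 1 + ‖x‖ - ε / 2 < sSup T := by rw [hT]; linarith
    obtain ⟨r, hrT, hr⟩ := exists_lt_of_lt_csSup hTne hlt
    obtain ⟨z', hz', ω, hω, rfl⟩ := hrT
    have hbd : Bornology.IsBounded (F n) :=
      (isBounded_closedBall (x := (0:X)) (r := 1)).subset (hFball n)
    have hdist : ‖z' - z‖ ≤ Metric.diam (F n) := by
      rw [← dist_eq_norm]
      exact dist_le_diam_of_mem hbd hz' (hzn n)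
    have key : ‖z' + ω • x‖ ≤ ‖z + ω • x‖ + ε / 2 := by
      calc ‖z' + ω • x‖ = ‖(z + ω • x) + (z' - z)‖ := by rw [show z + ω • x + (z' - z) = z' + ω • x from by abel]
        _ ≤ ‖z + ω • x‖ + ‖z' - z‖ := norm_add_le _ _
        _ ≤ ‖z + ω • x‖ + ε / 2 := by linarith
    have hmem : ‖z + ω • x‖ ≤ sSup S := le_csSup hSbdd' ⟨ω, hω, rfl⟩
    linarith
  refine ⟨?_, main⟩
  have h0 := main 0
  have : {r : ℝ | ∃ ω : 𝕜, ‖ω‖ = 1 ∧ r = ‖z + ω • (0:X)‖} = {‖z‖} := by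
    ext r
    simp only [Set.mem_setOf_eq, Set.mem_singleton_iff, smul_zero, add_zero]
    exact ⟨fun ⟨ω, _, h⟩ => h, fun h => ⟨1, norm_one, h⟩⟩
  rw [this, csSup_singleton, norm_zero, add_zero] at h0
  exact h0
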